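/- Let Φ ∈ C¹(ℝᴷ) with L-Lipschitz gradient satisfy (x − θ*)·∇Φ(x)/2 ≥ λ(Φ(x) − Φ(θ*) + ‖x − θ*‖²/4) for λ ∈ (0, 1/4], where θ* is its minimiser. Let 0 < m ≤ 1 and let (q_t, p_t) solve q' = p, m p' = −∇Φ(q) − p. Then ‖q_t − θ*‖² ≤ 16(L+2) e^{−λt} (‖q₀ − θ*‖² + m²‖p₀‖²) for all t ≥ 0. -/

import Mathlib

open RealInnerProductSpace

section auxiliary

set_option maxHeartbeats 1000000

variable {E : Type*} [NormedAddCommGroup E] [InnerProductSpace ℝ E] [CompleteSpace E]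

private lemma stmt8_comp_grad {Φ : E → ℝ} (hC1 : ContDiff ℝ 1 Φ)
    {f : ℝ → E} {v : E} {t : ℝ} (hf : HasDerivAt f v t) :
    HasDerivAt (fun s => Φ (f s)) ⟪gradient Φ (f t), v⟫ t := by
  have hg : HasGradientAt Φ (gradient Φ (f t)) (f t) :=
    ((hC1.differentiable one_ne_zero) (f t)).hasGradientAt
  have h2 := hg.hasFDerivAt.comp_hasDerivAt t hf
  simpa [InnerProductSpace.toDual_apply_apply, Function.comp_def] using h2

private lemma stmt8_grad_cont {Φ : E → ℝ} (hC1 : ContDiff ℝ 1 Φ) :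
    Continuous (gradient Φ) := by
  have h := hC1.continuous_fderiv one_ne_zero
  exact (InnerProductSpace.toDual ℝ E).symm.continuous.comp h

private lemma stmt8_gronwall (lam : ℝ) (f g : ℝ → ℝ) (hf : ∀ t, HasDerivAt f (g t) t)
    (h : ∀ t, g t ≤ -lam * f t) : ∀ t, 0 ≤ t → f t ≤ Real.exp (-(lam * t)) * f 0 := by
  have hF : ∀ t, HasDerivAt (fun s => Real.exp (lam * s) * f s)
      (Real.exp (lam * t) * lam * f t + Real.exp (lam * t) * g t) t := by
    intro t
    have h1 : HasDerivAt (fun s : ℝ => Real.exp (lam * s)) (Real.exp (lam * t) * lam) t := by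
      simpa using ((hasDerivAt_id t).const_mul lam).exp
    exact (h1.mul (hf t)).congr_deriv (by ring)
  have hanti : Antitone fun s => Real.exp (lam * s) * f s := by
    apply antitone_of_deriv_nonpos
    · intro t; exact (hF t).differentiableAt
    · intro t
      rw [(hF t).deriv]
      have := h t
      nlinarith [Real.exp_pos (lam * t)]
  intro t ht
  have h2 : Real.exp (lam * t) * f t ≤ f 0 := by simpa using hanti ht
  have hpos := Real.exp_pos (lam * t)
  rw [Real.exp_neg, inv_mul_eq_div, le_div_iff₀ hpos]
  nlinarith [h2]

private lemma stmt8_descent {Φ : E → ℝ} {L : ℝ} (hC1 : ContDiff ℝ 1 Φ)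
    (hLip : ∀ x y : E, ‖gradient Φ x - gradient Φ y‖ ≤ L * ‖x - y‖)
    {θs : E} (hgrad : gradient Φ θs = 0) (x : E) :
    Φ x - Φ θs ≤ L / 2 * ‖x - θs‖ ^ 2 := by
  set v := x - θs with hv
  have hf : ∀ s : ℝ, HasDerivAt (fun r : ℝ => θs + r • v) v s := by
    intro s
    simpa using ((hasDerivAt_id s).smul_const v).const_add θs
  have hφ : ∀ s : ℝ, HasDerivAt (fun r : ℝ => Φ (θs + r • v))
      ⟪gradient Φ (θs + s • v), v⟫ s := fun s => stmt8_comp_grad hC1 (hf s)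
  have hcont : Continuous fun s : ℝ => ⟪gradient Φ (θs + s • v), v⟫ :=
    Continuous.inner ((stmt8_grad_cont hC1).comp (by continuity)) continuous_const
  have hint : IntervalIntegrable (fun s : ℝ => ⟪gradient Φ (θs + s • v), v⟫)
      MeasureTheory.volume 0 1 := hcont.intervalIntegrable 0 1
  have heq := intervalIntegral.integral_eq_sub_of_hasDerivAt
      (f := fun r : ℝ => Φ (θs + r • v)) (fun s _ => hφ s) hint
  have hbound : ∀ s ∈ Set.Icc (0:ℝ) 1,
      ⟪gradient Φ (θs + s • v), v⟫ ≤ (L * ‖v‖ ^ 2) * s := by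
    intro s hs
    have h1 : ‖gradient Φ (θs + s • v)‖ ≤ L * (s * ‖v‖) := by
      have h := hLip (θs + s • v) θs
      simpa [hgrad, norm_smul, abs_of_nonneg hs.1] using h
    calc ⟪gradient Φ (θs + s • v), v⟫ ≤ ‖gradient Φ (θs + s • v)‖ * ‖v‖ :=
        real_inner_le_norm _ _
      _ ≤ (L * (s * ‖v‖)) * ‖v‖ := mul_le_mul_of_nonneg_right h1 (norm_nonneg _)
      _ = (L * ‖v‖ ^ 2) * s := by ring
  have hint2 : IntervalIntegrable (fun s : ℝ => (L * ‖v‖ ^ 2) * s)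
      MeasureTheory.volume 0 1 := (continuous_const.mul continuous_id).intervalIntegrable 0 1
  have hmono := intervalIntegral.integral_mono_on (by norm_num : (0:ℝ) ≤ 1) hint hint2 hbound
  have hcalc : (∫ s in (0:ℝ)..1, (L * ‖v‖ ^ 2) * s) = L / 2 * ‖v‖ ^ 2 := by
    rw [intervalIntegral.integral_const_mul, integral_id]
    ring
  have hval : Φ (θs + (1:ℝ) • v) - Φ (θs + (0:ℝ) • v) ≤ L / 2 * ‖v‖ ^ 2 := by
    rw [heq] at *
    linarith [hmono, hcalc.le, hcalc.ge]
  simpa [hv] using hval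

private lemma stmt8_inner_expand (m : ℝ) (X P : E) :
    ⟪X + m • P, X + m • P⟫ = ⟪X, X⟫ + 2*m*⟪X, P⟫ + m^2*⟪P, P⟫ := by
  rw [inner_add_left, inner_add_right, inner_add_right, real_inner_smul_left,
    real_inner_smul_left, real_inner_smul_right, real_inner_smul_right, real_inner_comm P X]
  ring

private lemma stmt8_pointwise (lam m : ℝ) (X P Gv : E) (Phit : ℝ)
    (hPhit : 0 ≤ Phit)
    (hass : lam * (Phit + ‖X‖ ^ 2 / 4) ≤ ⟪X, Gv⟫ / 2)
    (hm : 0 < m) (hm1 : m ≤ 1) (hlam : 0 < lam) (hlam4 : lam ≤ 1 / 4) :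
    2*m*⟪Gv, P⟫ + (1/2)*(⟪X + m • P, -Gv⟫ + ⟪-Gv, X + m • P⟫)
      + (1/2)*m^2*(⟪P, m⁻¹ • (-Gv - P)⟫ + ⟪m⁻¹ • (-Gv - P), P⟫)
      - lam*(1/2)*m*(⟪X, P⟫ + ⟪P, X⟫)
    ≤ -lam * (2*m*Phit + (1/2)*⟪X + m • P, X + m • P⟫ + (1/2)*m^2*⟪P, P⟫
        - lam*(1/2)*m*⟪X, X⟫) := by
  have e1 : ⟪X + m • P, -Gv⟫ = -⟪X, Gv⟫ - m * ⟪P, Gv⟫ := by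
    rw [inner_neg_right, inner_add_left, real_inner_smul_left]; ring
  have e2 : ⟪-Gv, X + m • P⟫ = -⟪X, Gv⟫ - m * ⟪P, Gv⟫ := by
    rw [real_inner_comm, e1]
  have e3 : ⟪P, m⁻¹ • (-Gv - P)⟫ = m⁻¹ * (-⟪P, Gv⟫ - ⟪P, P⟫) := by
    rw [real_inner_smul_right, inner_sub_right, inner_neg_right]
  have e4 : ⟪m⁻¹ • (-Gv - P), P⟫ = m⁻¹ * (-⟪P, Gv⟫ - ⟪P, P⟫) := by
    rw [real_inner_comm, e3]
  have e6 : ⟪Gv, P⟫ = ⟪P, Gv⟫ := real_inner_comm _ _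
  have e7 : ⟪P, X⟫ = ⟪X, P⟫ := real_inner_comm _ _
  have hminv : m^2 * m⁻¹ = m := by field_simp
  have hXX : ⟪X, X⟫ = ‖X‖^2 := real_inner_self_eq_norm_sq X
  have hPP : (0:ℝ) ≤ ⟪P, P⟫ := real_inner_self_nonneg
  rw [e1, e2, e3, e4, stmt8_inner_expand m X P, e6, e7, hXX]
  have h1 : 2*lam*Phit + (lam/2)*‖X‖^2 ≤ ⟪X, Gv⟫ := by nlinarith [hass]
  have h2 : 0 ≤ (1 - m) * (lam * Phit) := mul_nonneg (by linarith) (by positivity)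
  have h3 : 0 ≤ lam^2 * m * ‖X‖^2 := by positivity
  have h4 : 0 ≤ m * (1 - lam * m) * ⟪P, P⟫ :=
    mul_nonneg (mul_nonneg hm.le (by nlinarith)) hPP
  have expand : (1/2)*m^2*(m⁻¹ * (-⟪P, Gv⟫ - ⟪P, P⟫) + m⁻¹ * (-⟪P, Gv⟫ - ⟪P, P⟫))
      = m * (-⟪P, Gv⟫ - ⟪P, P⟫) := by
    rw [show (1/2)*m^2*(m⁻¹ * (-⟪P, Gv⟫ - ⟪P, P⟫) + m⁻¹ * (-⟪P, Gv⟫ - ⟪P, P⟫))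
      = (m^2 * m⁻¹) * (-⟪P, Gv⟫ - ⟪P, P⟫) by ring, hminv]
  rw [expand]
  nlinarith [h1, h2, h3, h4]

private lemma stmt8_lower (lam m : ℝ) (X P : E) (Phit : ℝ)
    (hPhit : 0 ≤ Phit)
    (hm : 0 < m) (hm1 : m ≤ 1) (hlam : 0 < lam) (hlam4 : lam ≤ 1 / 4) :
    (1/8) * ‖X‖^2 ≤ 2*m*Phit + (1/2)*⟪X + m • P, X + m • P⟫ + (1/2)*m^2*⟪P, P⟫
        - lam*(1/2)*m*⟪X, X⟫ := by
  rw [stmt8_inner_expand m X P, real_inner_self_eq_norm_sq X, real_inner_self_eq_norm_sq P]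
  have hcs : -(‖X‖ * ‖P‖) ≤ ⟪X, P⟫ := by
    have h := abs_real_inner_le_norm X P
    linarith [(abs_le.mp h).1]
  have hlm : lam * m ≤ 1/4 := by nlinarith
  nlinarith [mul_nonneg hm.le hPhit, sq_nonneg (‖X‖ - 2*m*‖P‖), norm_nonneg X, norm_nonneg P,
    mul_nonneg (mul_nonneg hm.le (norm_nonneg X)) (norm_nonneg P), sq_nonneg ‖X‖, sq_nonneg ‖P‖,
    mul_le_mul_of_nonneg_right hlm (sq_nonneg ‖X‖),
    mul_le_mul_of_nonneg_left hcs (mul_nonneg hm.le (by norm_num : (0:ℝ) ≤ 2))]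

private lemma stmt8_upper (lam m L : ℝ) (X P : E) (Phit : ℝ)
    (hPhit : 0 ≤ Phit) (hdes : Phit ≤ L/2 * ‖X‖^2) (hL : 0 ≤ L)
    (hm : 0 < m) (hm1 : m ≤ 1) (hlam : 0 < lam) :
    2*m*Phit + (1/2)*⟪X + m • P, X + m • P⟫ + (1/2)*m^2*⟪P, P⟫
        - lam*(1/2)*m*⟪X, X⟫ ≤ (L+1) * ‖X‖^2 + (3/2) * m^2 * ‖P‖^2 := by
  rw [stmt8_inner_expand m X P, real_inner_self_eq_norm_sq X, real_inner_self_eq_norm_sq P]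
  have hcs : ⟪X, P⟫ ≤ ‖X‖ * ‖P‖ := real_inner_le_norm X P
  have h2 : 2*m*Phit ≤ m*L*‖X‖^2 := by nlinarith [mul_le_mul_of_nonneg_left hdes hm.le]
  have h3 : m*L*‖X‖^2 ≤ L*‖X‖^2 := by nlinarith [mul_nonneg hL (sq_nonneg ‖X‖)]
  have h4 : m*⟪X, P⟫ ≤ ‖X‖^2/2 + m^2*‖P‖^2/2 := by
    nlinarith [sq_nonneg (‖X‖ - m*‖P‖), mul_le_mul_of_nonneg_left hcs hm.le,
      mul_nonneg hm.le (mul_nonneg (norm_nonneg X) (norm_nonneg P))]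
  nlinarith [mul_nonneg (mul_nonneg hlam.le hm.le) (sq_nonneg ‖X‖)]

end auxiliary

set_option maxHeartbeats 1000000 in
/-- Exponential convergence of the position of the fixed-sample underdamped flow with
small mass `m`, at rate independent of `m`. -/
theorem stmt8 {K : ℕ} (Φ : EuclideanSpace ℝ (Fin K) → ℝ) (L lam m : ℝ)
    (hC1 : ContDiff ℝ 1 Φ)
    (hLip : ∀ x y : EuclideanSpace ℝ (Fin K),
      ‖gradient Φ x - gradient Φ y‖ ≤ L * ‖x - y‖)
    (hlam : lam ∈ Set.Ioc (0 : ℝ) (1 / 4))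
    (θs : EuclideanSpace ℝ (Fin K)) (hmin : ∀ x, Φ θs ≤ Φ x)
    (hass : ∀ x, lam * (Φ x - Φ θs + ‖x - θs‖ ^ 2 / 4)
      ≤ ⟪x - θs, gradient Φ x⟫ / 2)
    (hm : 0 < m) (hm1 : m ≤ 1)
    (q p : ℝ → EuclideanSpace ℝ (Fin K))
    (hq : ∀ t, HasDerivAt q (p t) t)
    (hp : ∀ t, HasDerivAt p (m⁻¹ • (-(gradient Φ (q t)) - p t)) t) :
    ∀ t ≥ (0 : ℝ), ‖q t - θs‖ ^ 2
      ≤ 16 * (L + 2) * Real.exp (-(lam * t)) * (‖q 0 - θs‖ ^ 2 + m ^ 2 * ‖p 0‖ ^ 2) := by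
  intro t ht
  obtain ⟨hlam0, hlam4⟩ := hlam
  rcases Nat.eq_zero_or_pos K with hK | hK
  · subst hK
    have hzero : ∀ y : EuclideanSpace ℝ (Fin 0), ‖y‖ = 0 := by
      intro y
      rw [EuclideanSpace.norm_eq]
      simp
    rw [hzero (q t - θs), hzero (q 0 - θs), hzero (p 0)]
    norm_num
  -- K ≥ 1 : first, L ≥ 0
  have hL0 : 0 ≤ L := by
    have h := hLip (EuclideanSpace.single (⟨0, hK⟩ : Fin K) (1:ℝ)) 0
    have h2 : (0:ℝ) ≤ L * ‖EuclideanSpace.single (⟨0, hK⟩ : Fin K) (1:ℝ) - 0‖ :=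
      le_trans (norm_nonneg _) h
    have h3 : ‖EuclideanSpace.single (⟨0, hK⟩ : Fin K) (1:ℝ) - 0‖ = 1 := by
      rw [sub_zero, EuclideanSpace.norm_single]
      norm_num
    rw [h3] at h2
    linarith
  -- gradient vanishes at the minimiser
  have hgrad0 : gradient Φ θs = 0 := by
    have hlocmin : IsLocalMin Φ θs := Filter.Eventually.of_forall hmin
    have hfd0 : fderiv ℝ Φ θs = 0 := hlocmin.fderiv_eq_zero
    show (InnerProductSpace.toDual ℝ (EuclideanSpace ℝ (Fin K))).symm (fderiv ℝ Φ θs) = 0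
    rw [hfd0]
    simp
  -- the Lyapunov function
  set W : ℝ → ℝ := fun s =>
    2*m*(Φ (q s) - Φ θs) + (1/2)*⟪q s - θs + m • p s, q s - θs + m • p s⟫
      + (1/2)*m^2*⟪p s, p s⟫ - lam*(1/2)*m*⟪q s - θs, q s - θs⟫ with hWdef
  set D : ℝ → ℝ := fun s =>
    2*m*⟪gradient Φ (q s), p s⟫
      + (1/2)*(⟪q s - θs + m • p s, -(gradient Φ (q s))⟫
          + ⟪-(gradient Φ (q s)), q s - θs + m • p s⟫)
      + (1/2)*m^2*(⟪p s, m⁻¹ • (-(gradient Φ (q s)) - p s)⟫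
          + ⟪m⁻¹ • (-(gradient Φ (q s)) - p s), p s⟫)
      - lam*(1/2)*m*(⟪q s - θs, p s⟫ + ⟪p s, q s - θs⟫) with hDdef
  have hWderiv : ∀ s, HasDerivAt W (D s) s := by
    intro s
    have h1 : HasDerivAt (fun r => Φ (q r) - Φ θs) ⟪gradient Φ (q s), p s⟫ s :=
      (stmt8_comp_grad hC1 (hq s)).sub_const _
    have hx : HasDerivAt (fun r => q r - θs) (p s) s := (hq s).sub_const _
    have hu0 : HasDerivAt (fun r => q r - θs + m • p r)
        (p s + m • (m⁻¹ • (-(gradient Φ (q s)) - p s))) s := hx.add ((hp s).const_smul m)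
    have hsimp : p s + m • (m⁻¹ • (-(gradient Φ (q s)) - p s)) = -(gradient Φ (q s)) := by
      rw [smul_smul, mul_inv_cancel₀ (ne_of_gt hm), one_smul]
      abel
    rw [hsimp] at hu0
    have h2 := HasDerivAt.inner ℝ hu0 hu0
    have h3 := HasDerivAt.inner ℝ (hp s) (hp s)
    have h4 := HasDerivAt.inner ℝ hx hx
    exact (((h1.const_mul (2*m)).add (h2.const_mul (1/2))).add
      (h3.const_mul ((1/2)*m^2))).sub (h4.const_mul (lam*(1/2)*m))
  have hWle : ∀ s, D s ≤ -lam * W s := by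
    intro s
    exact stmt8_pointwise lam m (q s - θs) (p s) (gradient Φ (q s)) (Φ (q s) - Φ θs)
      (by linarith [hmin (q s)]) (hass (q s)) hm hm1 hlam0 hlam4
  have hdecay := stmt8_gronwall lam W D hWderiv hWle t ht
  have hlow : (1/8) * ‖q t - θs‖^2 ≤ W t :=
    stmt8_lower lam m (q t - θs) (p t) (Φ (q t) - Φ θs)
      (by linarith [hmin (q t)]) hm hm1 hlam0 hlam4
  have hupp : W 0 ≤ (L+1) * ‖q 0 - θs‖^2 + (3/2) * m^2 * ‖p 0‖^2 :=
    stmt8_upper lam m L (q 0 - θs) (p 0) (Φ (q 0) - Φ θs)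
      (by linarith [hmin (q 0)]) (stmt8_descent hC1 hLip hgrad0 (q 0)) hL0 hm hm1 hlam0
  have hexp : (0:ℝ) < Real.exp (-(lam * t)) := Real.exp_pos _
  have hx0 : (0:ℝ) ≤ ‖q 0 - θs‖^2 := sq_nonneg _
  have hp0 : (0:ℝ) ≤ ‖p 0‖^2 := sq_nonneg _
  have hm2 : (0:ℝ) ≤ m^2 := sq_nonneg _
  have chain : (1/8) * ‖q t - θs‖^2
      ≤ Real.exp (-(lam * t)) * ((L+1) * ‖q 0 - θs‖^2 + (3/2) * m^2 * ‖p 0‖^2) :=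
    le_trans hlow (le_trans hdecay (mul_le_mul_of_nonneg_left hupp hexp.le))
  nlinarith [chain, mul_nonneg (mul_nonneg hexp.le hL0) hx0,
    mul_nonneg (mul_nonneg hexp.le hL0) (mul_nonneg hm2 hp0),
    mul_nonneg hexp.le (mul_nonneg hm2 hp0), mul_nonneg hexp.le hx0]
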